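/- Let |a⟩ and |b⟩ be vectors in a finite-dimensional Hilbert space and let ρ = |a⟩⟨b| + |b⟩⟨a| with tr ρ = 0. Then the trace norm of ρ satisfies ‖ρ‖₁ ≤ 2√(⟨a|a⟩⟨b|b⟩). -/

import Mathlib

open Matrix
open scoped ComplexOrder

/-- The trace norm of a square complex matrix: the sum of its singular values.
For a Hermitian matrix this equals the sum of the absolute values of its eigenvalues. -/

lemma vmv_mul_vmv {n : ℕ} (u v w x : Fin n → ℂ) :
    vecMulVec u v * vecMulVec w x = (v ⬝ᵥ w) • vecMulVec u x := by
  ext i j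
  simp only [Matrix.mul_apply, vecMulVec_apply, Matrix.smul_apply, dotProduct,
    Finset.sum_mul, smul_eq_mul, Finset.mul_sum]
  congr 1; ext k; ring

lemma trace_vmv {n : ℕ} (u v : Fin n → ℂ) :
    (vecMulVec u v).trace = v ⬝ᵥ u := by
  simp [Matrix.trace, Matrix.diag, vecMulVec_apply, dotProduct, mul_comm]

lemma vmv_mulVec {n : ℕ} (u v x : Fin n → ℂ) :
    vecMulVec u v *ᵥ x = (v ⬝ᵥ x) • u := by
  funext i
  simp only [Matrix.mulVec, vecMulVec_apply, dotProduct, Pi.smul_apply, smul_eq_mul,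
    Finset.sum_mul, Finset.mul_sum]
  congr 1; ext k; ring

lemma herm_trace_eq {m : Type*} [Fintype m] [DecidableEq m] {A : Matrix m m ℂ}
    (hA : A.IsHermitian) : A.trace = ∑ i, (hA.eigenvalues i : ℂ) := by
  conv_lhs => rw [hA.spectral_theorem]
  rw [Unitary.conjStarAlgAut_apply]
  rw [Matrix.trace_mul_cycle]
  have h1 : (star (hA.eigenvectorUnitary : Matrix m m ℂ)) * (hA.eigenvectorUnitary : Matrix m m ℂ) = 1 :=
    (Matrix.mem_unitaryGroup_iff').mp hA.eigenvectorUnitary.2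
  rw [h1, one_mul, Matrix.trace_diagonal]
  simp

lemma rank_le_two' {n : ℕ} (a b : Fin n → ℂ) (ρ : Matrix (Fin n) (Fin n) ℂ)
    (hρ : ρ = vecMulVec a (star b) + vecMulVec b (star a)) : ρ.rank ≤ 2 := by
  have hsub : LinearMap.range ρ.mulVecLin ≤ Submodule.span ℂ {a, b} := by
    rintro y ⟨x, rfl⟩
    have : ρ.mulVecLin x = (star b ⬝ᵥ x) • a + (star a ⬝ᵥ x) • b := by
      simp [hρ, Matrix.mulVecLin_apply, Matrix.add_mulVec, vmv_mulVec]
    rw [this]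
    exact Submodule.add_mem _
      (Submodule.smul_mem _ _ (Submodule.subset_span (by simp)))
      (Submodule.smul_mem _ _ (Submodule.subset_span (by simp)))
  calc ρ.rank ≤ Module.finrank ℂ (Submodule.span ℂ ({a, b} : Set (Fin n → ℂ))) :=
        Submodule.finrank_mono hsub
    _ ≤ ({a, b} : Set (Fin n → ℂ)).toFinset.card := finrank_span_le_card _
    _ ≤ 2 := by
        classical
        simp only [Set.toFinset_insert, Set.toFinset_singleton]
        exact (Finset.card_insert_le _ _).trans (by simp)

lemma dot_self_eq {n : ℕ} (a : Fin n → ℂ) :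
    star a ⬝ᵥ a = ((∑ i, Complex.normSq (a i) : ℝ) : ℂ) := by
  push_cast
  simp [dotProduct, Complex.normSq_eq_conj_mul_self]

noncomputable def traceNorm {n : Type*} [Fintype n] [DecidableEq n]
    (A : Matrix n n ℂ) : ℝ :=
  ∑ i, Real.sqrt ((Matrix.posSemidef_conjTranspose_mul_self A).isHermitian.eigenvalues i)

/-- If ρ = |a⟩⟨b| + |b⟩⟨a| has trace zero, then ‖ρ‖₁ ≤ 2√(⟨a|a⟩⟨b|b⟩). -/
theorem stmt0 {n : ℕ} (a b : Fin n → ℂ)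
    (ρ : Matrix (Fin n) (Fin n) ℂ)
    (hρ : ρ = vecMulVec a (star b) + vecMulVec b (star a))
    (htr : ρ.trace = 0) :
    traceNorm ρ ≤ 2 * Real.sqrt ((star a ⬝ᵥ a).re * (star b ⬝ᵥ b).re) := by
  classical
  set s : ℂ := star b ⬝ᵥ a with hs
  set t : ℂ := star a ⬝ᵥ b with ht
  have hherm : ρᴴ = ρ := by
    rw [hρ]
    ext i j
    simp [Matrix.conjTranspose_apply, vecMulVec_apply, mul_comm, add_comm]
  -- trace zero consequences
  have htr' : s + t = 0 := by
    rw [hρ, Matrix.trace_add, trace_vmv, trace_vmv] at htr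
    linear_combination htr
  have hts : t = starRingEnd ℂ s := by
    simp [hs, ht, dotProduct, map_sum]
    congr 1; ext i; ring
  have hsre : s.re = 0 := by
    have := congrArg Complex.re htr'
    simp [hts] at this ⊢
    linarith [this]
  -- norms
  have hna := dot_self_eq a
  have hnb := dot_self_eq b
  have hnare : (star a ⬝ᵥ a).re = ∑ i, Complex.normSq (a i) := by rw [hna]; simp
  have hnbre : (star b ⬝ᵥ b).re = ∑ i, Complex.normSq (b i) := by rw [hnb]; simp
  have hna0 : 0 ≤ (star a ⬝ᵥ a).re := by
    rw [hnare]; exact Finset.sum_nonneg fun i _ => Complex.normSq_nonneg _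
  have hnb0 : 0 ≤ (star b ⬝ᵥ b).re := by
    rw [hnbre]; exact Finset.sum_nonneg fun i _ => Complex.normSq_nonneg _
  -- trace of ρ² computation
  have hsq : (ρ * ρ).trace = s * s + t * t +
      (star b ⬝ᵥ b) * (star a ⬝ᵥ a) + (star a ⬝ᵥ a) * (star b ⬝ᵥ b) := by
    rw [hρ]
    rw [add_mul, mul_add, mul_add]
    simp only [vmv_mul_vmv, Matrix.trace_add, Matrix.trace_smul, trace_vmv, smul_eq_mul]
    rw [← hs, ← ht]
    ring
  have htrre : ((ρ * ρ).trace).re ≤ 2 * ((star a ⬝ᵥ a).re * (star b ⬝ᵥ b).re) := by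
    rw [hsq]
    have h1 : (s * s).re = - (s.im * s.im) := by
      simp [Complex.mul_re, hsre]
    have h2 : (t * t).re = - (s.im * s.im) := by
      simp [hts, Complex.mul_re, hsre]
    have h3 : ((star b ⬝ᵥ b) * (star a ⬝ᵥ a)).re = (star a ⬝ᵥ a).re * (star b ⬝ᵥ b).re := by
      rw [hna, hnb]; push_cast; ring_nf; simp [mul_comm]
    have h4 : ((star a ⬝ᵥ a) * (star b ⬝ᵥ b)).re = (star a ⬝ᵥ a).re * (star b ⬝ᵥ b).re := by
      rw [hna, hnb]; push_cast; simp
    simp only [Complex.add_re, h1, h2, h3, h4]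
    nlinarith [sq_nonneg s.im]
  -- eigenvalues
  set M := ρᴴ * ρ with hM
  have hpsd := Matrix.posSemidef_conjTranspose_mul_self ρ
  set ev := hpsd.isHermitian.eigenvalues with hev
  have hev0 : ∀ i, 0 ≤ ev i := fun i => hpsd.eigenvalues_nonneg i
  have hsum : ∑ i, ev i = M.trace.re := by
    have := herm_trace_eq hpsd.isHermitian
    have := congrArg Complex.re this
    simp at this
    rw [this]
  have hsumle : ∑ i, ev i ≤ 2 * ((star a ⬝ᵥ a).re * (star b ⬝ᵥ b).re) := by
    rw [hsum, hM, hherm]; exact htrre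
  -- cardinality of support
  set T := Finset.univ.filter (fun i => ev i ≠ 0) with hT
  have hcard : T.card ≤ 2 := by
    have h1 : M.rank = Fintype.card {i // ev i ≠ 0} :=
      hpsd.isHermitian.rank_eq_card_non_zero_eigs
    have h2 : Fintype.card {i // ev i ≠ 0} = T.card := by
      rw [hT, Fintype.card_subtype]
    have h3 : M.rank = ρ.rank := Matrix.rank_conjTranspose_mul_self ρ
    have := rank_le_two' a b ρ hρ
    omega
  -- main estimate
  have hTN : traceNorm ρ = ∑ i ∈ T, Real.sqrt (ev i) := by
    rw [traceNorm]
    refine (Finset.sum_subset (Finset.subset_univ T) ?_).symm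
    intro i _ hi
    have : ev i = 0 := by
      by_contra h
      exact hi (Finset.mem_filter.mpr ⟨Finset.mem_univ i, h⟩)
    show Real.sqrt (ev i) = 0
    rw [this, Real.sqrt_zero]
  have key : (∑ i ∈ T, Real.sqrt (ev i)) ^ 2 ≤
      (2 * Real.sqrt ((star a ⬝ᵥ a).re * (star b ⬝ᵥ b).re)) ^ 2 := by
    calc (∑ i ∈ T, Real.sqrt (ev i)) ^ 2
        ≤ T.card * ∑ i ∈ T, Real.sqrt (ev i) ^ 2 := sq_sum_le_card_mul_sum_sq
      _ = T.card * ∑ i ∈ T, ev i := by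
          congr 1
          exact Finset.sum_congr rfl fun i _ => Real.sq_sqrt (hev0 i)
      _ ≤ 2 * ∑ i, ev i := by
          have h1 : ∑ i ∈ T, ev i ≤ ∑ i, ev i :=
            Finset.sum_le_sum_of_subset_of_nonneg (Finset.subset_univ T)
              (fun i _ _ => hev0 i)
          have h2 : (0:ℝ) ≤ ∑ i ∈ T, ev i := Finset.sum_nonneg fun i _ => hev0 i
          have : (T.card : ℝ) ≤ 2 := by exact_mod_cast hcard
          nlinarith
      _ ≤ 2 * (2 * ((star a ⬝ᵥ a).re * (star b ⬝ᵥ b).re)) := by linarith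
      _ = (2 * Real.sqrt ((star a ⬝ᵥ a).re * (star b ⬝ᵥ b).re)) ^ 2 := by
          rw [mul_pow, Real.sq_sqrt (mul_nonneg hna0 hnb0)]; ring
  rw [hTN]
  have hL : 0 ≤ ∑ i ∈ T, Real.sqrt (ev i) :=
    Finset.sum_nonneg fun i _ => Real.sqrt_nonneg _
  have hR : 0 ≤ 2 * Real.sqrt ((star a ⬝ᵥ a).re * (star b ⬝ᵥ b).re) := by positivity
  nlinarith
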